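/- For every tree T rooted at a vertex r (with at least one edge and T not isomorphic to K_2), the 2-multigraph ²T admits a red-blue edge coloring such that within each color class all adjacent pairs of vertices have distinct degrees, except possibly for conflicts between r and at most two of its neighbors; moreover this coloring can be chosen so that r and all its neighbors have even degree in each color class. -/

import Mathlib

open Finset SimpleGraph

/-- Degree of `v` in the color class `k` of the edge coloring `c` of `G`. -/
def degIn {V K : Type*} [Fintype V] (G : SimpleGraph V) [DecidableRel G.Adj] [DecidableEq K]
    (c : Sym2 V → K) (k : K) (v : V) : ℕ :=
  (Finset.univ.filter fun w => G.Adj v w ∧ c s(v, w) = k).card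

/-- `c` is a locally irregular edge coloring of the simple graph `G`. -/
def IsLIC {V K : Type*} [Fintype V] (G : SimpleGraph V) [DecidableRel G.Adj] [DecidableEq K]
    (c : Sym2 V → K) : Prop :=
  ∀ v w, G.Adj v w → degIn G c (c s(v, w)) v ≠ degIn G c (c s(v, w)) w

/-- In the 2-multigraph `²G`, each edge of `G` carries a pair of colors (one for each
parallel copy).  `degIn2 G c k v` is the degree of `v` in the color class `k`. -/
def degIn2 {V K : Type*} [Fintype V] (G : SimpleGraph V) [DecidableRel G.Adj] [DecidableEq K]
    (c : Sym2 V → K × K) (k : K) (v : V) : ℕ :=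
  ∑ w ∈ Finset.univ.filter (fun w => G.Adj v w),
    ((if (c s(v, w)).1 = k then 1 else 0) + (if (c s(v, w)).2 = k then 1 else 0))

/-- `c` is a locally irregular edge coloring of the 2-multigraph `²G`. -/
def IsLIC2 {V K : Type*} [Fintype V] (G : SimpleGraph V) [DecidableRel G.Adj] [DecidableEq K]
    (c : Sym2 V → K × K) : Prop :=
  ∀ v w, G.Adj v w → ∀ k : K, ((c s(v, w)).1 = k ∨ (c s(v, w)).2 = k) →
    degIn2 G c k v ≠ degIn2 G c k w

instance {n : ℕ} : DecidableRel (SimpleGraph.pathGraph n).Adj := fun _ _ =>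
  decidable_of_iff _ (SimpleGraph.pathGraph_adj).symm



open Finset SimpleGraph
set_option linter.unusedSectionVars false

section Core

variable {V : Type*} [Fintype V] [DecidableEq V]

/-- A rooted tree structure given by a parent map together with a depth function. -/
structure RTree (V : Type*) where
  r : V
  par : V → V
  dep : V → ℕ
  hpr : par r = r
  hdr : dep r = 0
  hdep : ∀ v, v ≠ r → dep v = dep (par v) + 1

namespace RTree

variable (R : RTree V)

/-- the children of a vertex -/
def children (v : V) : Finset V := univ.filter fun u => u ≠ R.r ∧ R.par u = v

lemma mem_children {u v : V} : u ∈ R.children v ↔ u ≠ R.r ∧ R.par u = v := by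
  simp [children]

/-- `Desc v u` : `u` is a descendant of `v` (possibly `u = v`). -/
def Desc (v u : V) : Prop := ∃ n, R.par^[n] u = v

lemma desc_refl (v : V) : R.Desc v v := ⟨0, rfl⟩

lemma iter_fix (n : ℕ) : R.par^[n] R.r = R.r := by
  induction n with
  | zero => rfl
  | succ n ih => rw [Function.iterate_succ_apply, R.hpr, ih]

lemma iter_reach (u : V) : R.par^[R.dep u] u = R.r := by
  generalize h : R.dep u = n
  induction n generalizing u with
  | zero =>
    by_contra h'
    by_cases hu : u = R.r
    · subst hu; simp at h'
    · rw [R.hdep u hu] at h; omega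
  | succ n ih =>
    by_cases hu : u = R.r
    · subst hu; exact R.iter_fix _
    · have := R.hdep u hu
      rw [Function.iterate_succ_apply]
      exact ih _ (by omega)

lemma desc_root (u : V) : R.Desc R.r u := ⟨R.dep u, R.iter_reach u⟩

lemma dep_par_le (u : V) : R.dep (R.par u) ≤ R.dep u := by
  by_cases hu : u = R.r
  · subst hu; rw [R.hpr]
  · rw [R.hdep u hu]; omega

lemma dep_le_of_desc {v u : V} (h : R.Desc v u) : R.dep v ≤ R.dep u := by
  obtain ⟨n, hn⟩ := h
  induction n generalizing u with
  | zero => simp only [Function.iterate_zero_apply] at hn; subst hn; exact le_rfl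
  | succ n ih =>
    rw [Function.iterate_succ_apply] at hn
    exact le_trans (ih hn) (R.dep_par_le u)

lemma desc_trans {v u x : V} (h1 : R.Desc v u) (h2 : R.Desc u x) : R.Desc v x := by
  obtain ⟨n, hn⟩ := h1; obtain ⟨m, hm⟩ := h2
  exact ⟨n + m, by rw [Function.iterate_add_apply, hm, hn]⟩

lemma desc_of_child {u v : V} (h : u ∈ R.children v) : R.Desc v u := by
  rw [mem_children] at h
  exact ⟨1, h.2⟩

lemma dep_of_child {u v : V} (h : u ∈ R.children v) : R.dep u = R.dep v + 1 := by
  rw [mem_children] at h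
  rw [R.hdep u h.1, h.2]

lemma desc_ne_root {v u : V} (hv : v ≠ R.r) (h : R.Desc v u) : u ≠ R.r := by
  rintro rfl
  obtain ⟨n, hn⟩ := h
  rw [R.iter_fix] at hn
  exact hv hn.symm


lemma desc_par {v u : V} (h : R.Desc v u) (hne : u ≠ v) : R.Desc v (R.par u) := by
  obtain ⟨n, hn⟩ := h
  cases n with
  | zero => simp at hn; exact absurd hn hne
  | succ n => exact ⟨n, by rwa [Function.iterate_succ_apply] at hn⟩

lemma dep_lt_of_desc_ne {v u : V} (h : R.Desc v u) (hne : u ≠ v) : R.dep v < R.dep u := by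
  have hur : u ≠ R.r := by
    intro heq
    subst heq
    obtain ⟨n, hn⟩ := h
    rw [R.iter_fix] at hn
    exact hne hn
  have h1 : R.dep v ≤ R.dep (R.par u) := R.dep_le_of_desc (R.desc_par h hne)
  have h2 := R.hdep u hur
  omega

lemma desc_antisymm {v u : V} (h1 : R.Desc v u) (h2 : R.Desc u v) : u = v := by
  by_contra hne
  have := R.dep_lt_of_desc_ne h1 hne
  have := R.dep_le_of_desc h2
  omega

/-- if `x` is a proper descendant of `v` then it lies below a unique child of `v`. -/
lemma exists_child_desc {v x : V} (h : R.Desc v x) (hne : x ≠ v) :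
    ∃ u ∈ R.children v, R.Desc u x := by
  obtain ⟨n, hn⟩ := h
  induction n generalizing x with
  | zero => simp only [Function.iterate_zero_apply] at hn; exact absurd hn hne
  | succ n ih =>
    rw [Function.iterate_succ_apply] at hn
    by_cases hpx : R.par x = v
    · refine ⟨x, ?_, R.desc_refl x⟩
      rw [mem_children]
      refine ⟨?_, hpx⟩
      rintro rfl
      exact hne (by rw [← hpx, R.hpr])
    · have hxr : x ≠ R.r := by
        rintro rfl
        rw [R.hpr] at hpx hn
        rw [R.iter_fix] at hn
        exact hpx hn
      obtain ⟨u, hu, hd⟩ := ih hpx hn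
      exact ⟨u, hu, R.desc_trans hd ⟨1, rfl⟩⟩

lemma desc_chain {u₁ u₂ x : V} (h1 : R.Desc u₁ x) (h2 : R.Desc u₂ x) :
    R.Desc u₁ u₂ ∨ R.Desc u₂ u₁ := by
  obtain ⟨a, ha⟩ := h1; obtain ⟨b, hb⟩ := h2
  rcases le_total a b with h | h
  · right
    obtain ⟨c, rfl⟩ := Nat.exists_eq_add_of_le h
    refine ⟨c, ?_⟩
    rw [← ha, ← Function.iterate_add_apply, Nat.add_comm c a]
    exact hb
  · left
    obtain ⟨c, rfl⟩ := Nat.exists_eq_add_of_le h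
    refine ⟨c, ?_⟩
    rw [← hb, ← Function.iterate_add_apply, Nat.add_comm c b]
    exact ha

/-- distinct children have disjoint sets of descendants. -/
lemma children_desc_disjoint {v u₁ u₂ x : V} (h1 : u₁ ∈ R.children v) (h2 : u₂ ∈ R.children v)
    (hd1 : R.Desc u₁ x) (hd2 : R.Desc u₂ x) : u₁ = u₂ := by
  have e1 := R.dep_of_child h1
  have e2 := R.dep_of_child h2
  rcases R.desc_chain hd1 hd2 with h | h
  · by_contra hne
    have := R.dep_lt_of_desc_ne h (fun hh => hne hh.symm)
    omega
  · by_contra hne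
    have := R.dep_lt_of_desc_ne h hne
    omega

end RTree

end Core
section Part2

variable {V : Type*} [Fintype V] [DecidableEq V]

namespace RTree

variable (R : RTree V)

noncomputable instance decDesc : ∀ v u, Decidable (R.Desc v u) := fun _ _ =>
  Classical.dec _

/-- the set of descendants of `v` (including `v`). -/
noncomputable def descFinset (v : V) : Finset V := univ.filter (R.Desc v ·)

lemma mem_descFinset {v u : V} : u ∈ R.descFinset v ↔ R.Desc v u := by
  simp [descFinset]

lemma descFinset_ssubset {u v : V} (h : u ∈ R.children v) :
    R.descFinset u ⊂ R.descFinset v := by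
  constructor
  · intro x hx
    rw [mem_descFinset] at *
    exact R.desc_trans (R.desc_of_child h) hx
  · intro hsub
    have hv : v ∈ R.descFinset v := (R.mem_descFinset).2 (R.desc_refl v)
    have := (R.mem_descFinset).1 (hsub hv)
    have h1 := R.dep_le_of_desc this
    have h2 := R.dep_of_child h
    omega

/-- degree of a vertex in the tree. -/
def dg (v : V) : ℕ := (R.children v).card + (if v = R.r then 0 else 1)

/-- `Sw t v` : the degree of `v` in color class `0` where the parent edge of `u` carries
`t u` copies of color `0`. -/
def Sw (t : V → ℕ) (v : V) : ℕ :=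
  (if v = R.r then 0 else t v) + ∑ u ∈ R.children v, t u

/-- local irregularity conditions for the edge with lower endpoint having class-0 degree `s`
and degree `du`, edge weight `tw`, upper endpoint class-0 degree `S` and degree `dv`. -/
def condE (s du tw S dv : ℕ) : Prop :=
  (1 ≤ tw → s ≠ S) ∧ (tw ≤ 1 → s + 2 * dv ≠ S + 2 * du)

/-- the conditions for the parent edge of `u`, for a global weighting `t`. -/
def cond (t : V → ℕ) (u : V) : Prop :=
  condE (R.Sw t u) (R.dg u) (t u) (R.Sw t (R.par u)) (R.dg (R.par u))

/-- `s` is achievable at `v` with pending parent-edge weight `τ` : there is a weighting of the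
subtree below `v` (plus parent edge weight `τ`), valid at all edges strictly below `v`
(including the edges from `v` to its children), whose class-0 degree at `v` is `s`. -/
def Ach (v : V) (τ s : ℕ) : Prop :=
  ∃ t : V → ℕ, (∀ u, t u ≤ 2) ∧ t v = τ ∧ (∀ u, ¬ R.Desc v u → t u = 0) ∧
    (∀ u, R.Desc v u → u ≠ v → R.cond t u) ∧ R.Sw t v = s

lemma children_subset_desc {v u : V} (hv : R.Desc v u) {x : V} (hx : x ∈ R.children u) :
    R.Desc v x :=
  R.desc_trans hv (R.desc_of_child hx)

lemma Sw_congr {t₁ t₂ : V → ℕ} {v u : V} (hu : R.Desc v u)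
    (h : ∀ x, R.Desc v x → t₁ x = t₂ x) : R.Sw t₁ u = R.Sw t₂ u := by
  unfold Sw
  congr 1
  · by_cases hr : u = R.r <;> simp [hr, h u hu]
  · exact Finset.sum_congr rfl fun x hx => h x (R.children_subset_desc hu hx)

lemma cond_congr {t₁ t₂ : V → ℕ} {v u : V} (hu : R.Desc v u) (hne : u ≠ v)
    (h : ∀ x, R.Desc v x → t₁ x = t₂ x) : R.cond t₁ u ↔ R.cond t₂ u := by
  unfold cond
  rw [R.Sw_congr hu h, R.Sw_congr (R.desc_par hu hne) h, h u hu]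

/-- Combination lemma : colorings of the subtrees of the children of `v`, chosen with
compatible interface values, glue to a coloring below `v`. -/
lemma combine (v : V) (τ : ℕ) (hτ : τ ≤ 2) (E : Finset V) (w s : V → ℕ)
    (hw : ∀ u ∈ R.children v, w u ≤ 2)
    (hach : ∀ u ∈ R.children v, R.Ach u (w u) (s u))
    (hcond : ∀ u ∈ R.children v, u ∈ E ∨
      condE (s u) (R.dg u) (w u)
        ((if v = R.r then 0 else τ) + ∑ x ∈ R.children v, w x) (R.dg v)) :
    ∃ t : V → ℕ, (∀ u, t u ≤ 2) ∧ t v = τ ∧ (∀ u, ¬ R.Desc v u → t u = 0) ∧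
      (∀ u, R.Desc v u → u ≠ v → (R.cond t u ∨ u ∈ E)) ∧
      R.Sw t v = (if v = R.r then 0 else τ) + ∑ x ∈ R.children v, w x ∧
      (∀ u ∈ R.children v, R.Sw t u = s u) := by
  classical
  have hach' : ∀ u, ∃ tu : V → ℕ, u ∈ R.children v →
      (∀ x, tu x ≤ 2) ∧ tu u = w u ∧ (∀ x, ¬ R.Desc u x → tu x = 0) ∧
      (∀ x, R.Desc u x → x ≠ u → R.cond tu x) ∧ R.Sw tu u = s u := by
    intro u
    by_cases hu : u ∈ R.children v
    · obtain ⟨tu, h1, h2, h3, h4, h5⟩ := hach u hu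
      exact ⟨tu, fun _ => ⟨h1, h2, h3, h4, h5⟩⟩
    · exact ⟨fun _ => 0, fun h => absurd h hu⟩
  choose T hT using hach'
  set t : V → ℕ := fun x => if x = v then τ else
    ∑ u ∈ R.children v, (if R.Desc u x then T u x else 0) with ht
  -- `v` is not a descendant of any of its children
  have hvnd : ∀ u ∈ R.children v, ¬ R.Desc u v := by
    intro u hu hd
    have h1 := R.dep_le_of_desc hd
    have h2 := R.dep_of_child hu
    omega
  -- the value of `t` on descendants of a child `u`
  have hloc : ∀ u ∈ R.children v, ∀ x, R.Desc u x → t x = T u x := by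
    intro u hu x hx
    have hxv : x ≠ v := by
      rintro rfl
      exact hvnd u hu hx
    rw [ht]
    simp only [hxv, if_false]
    rw [Finset.sum_eq_single u]
    · simp [hx]
    · intro u' hu' hne
      have : ¬ R.Desc u' x := fun hd => hne (R.children_desc_disjoint hu' hu hd hx)
      simp [this]
    · intro h; exact absurd hu h
  have htv : t v = τ := by rw [ht]; simp
  have hout : ∀ x, ¬ R.Desc v x → t x = 0 := by
    intro x hx
    have hxv : x ≠ v := by intro h; subst h; exact hx (R.desc_refl x)
    rw [ht]
    simp only [hxv, if_false]
    apply Finset.sum_eq_zero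
    intro u hu
    have : ¬ R.Desc u x := fun hd => hx (R.desc_trans (R.desc_of_child hu) hd)
    simp [this]
  have hb : ∀ x, t x ≤ 2 := by
    intro x
    by_cases hxv : x = v
    · rw [hxv, htv]; exact hτ
    by_cases hx : R.Desc v x
    · obtain ⟨u, hu, hd⟩ := R.exists_child_desc hx hxv
      rw [hloc u hu x hd]
      exact ((hT u) hu).1 x
    · rw [hout x hx]; omega
  -- t on each child itself
  have htu : ∀ u ∈ R.children v, t u = w u := by
    intro u hu
    rw [hloc u hu u (R.desc_refl u)]
    exact ((hT u) hu).2.1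
  have hSwv : R.Sw t v = (if v = R.r then 0 else τ) + ∑ x ∈ R.children v, w x := by
    unfold Sw
    congr 1
    · by_cases hr : v = R.r <;> simp [hr, htv]
    · exact Finset.sum_congr rfl htu
  have hSwu : ∀ u ∈ R.children v, R.Sw t u = s u := by
    intro u hu
    rw [R.Sw_congr (R.desc_refl u) (fun x hx => hloc u hu x hx)]
    exact ((hT u) hu).2.2.2.2
  refine ⟨t, hb, htv, hout, ?_, hSwv, hSwu⟩
  intro x hx hxv
  obtain ⟨u, hu, hd⟩ := R.exists_child_desc hx hxv
  by_cases hxu : x = u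
  · subst hxu
    rcases hcond x hu with hE | hc
    · exact Or.inr hE
    · left
      unfold cond
      have hpar : R.par x = v := ((R.mem_children).1 hu).2
      rw [hpar, hSwv, hSwu x hu, htu x hu]
      exact hc
  · left
    rw [R.cond_congr hd hxu (fun y hy => hloc u hu y hy)]
    exact ((hT u) hu).2.2.2.1 x hd hxu

end RTree

end Part2
section Part3

lemma pick_two {P : ℕ → Prop} {a₁ a₂ : ℕ} (hne : a₁ ≠ a₂) (h₁ : P a₁) (h₂ : P a₂)
    (A B : ℕ) : ∃ s, P s ∧ s + A ≠ B := by
  by_cases h : a₁ + A = B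
  · exact ⟨a₂, h₂, fun hc => hne (by omega)⟩
  · exact ⟨a₁, h₁, h⟩

lemma pick_two' {P : ℕ → Prop} {a₁ a₂ : ℕ} (hne : a₁ ≠ a₂) (h₁ : P a₁) (h₂ : P a₂)
    (S : ℕ) : ∃ s, P s ∧ s ≠ S := by
  by_cases h : a₁ = S
  · exact ⟨a₂, h₂, fun hc => hne (by omega)⟩
  · exact ⟨a₁, h₁, h⟩

lemma pick_three {P : ℕ → Prop} {b₁ b₂ b₃ : ℕ} (h12 : b₁ ≠ b₂) (h13 : b₁ ≠ b₃)
    (h23 : b₂ ≠ b₃) (h₁ : P b₁) (h₂ : P b₂) (h₃ : P b₃) (S A B : ℕ) :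
    ∃ s, P s ∧ s ≠ S ∧ s + A ≠ B := by
  by_cases e1 : b₁ ≠ S ∧ b₁ + A ≠ B
  · exact ⟨b₁, h₁, e1⟩
  by_cases e2 : b₂ ≠ S ∧ b₂ + A ≠ B
  · exact ⟨b₂, h₂, e2⟩
  rw [not_and_or, not_ne_iff, not_ne_iff] at e1 e2
  exact ⟨b₃, h₃, by omega, by omega⟩

variable {V : Type*} [Fintype V] [DecidableEq V]

namespace RTree

variable (R : RTree V)

lemma desc_eq_of_no_children {v u : V} (hv : R.children v = ∅) (h : R.Desc v u) : u = v := by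
  by_contra hne
  obtain ⟨x, hx, -⟩ := R.exists_child_desc h hne
  rw [hv] at hx
  exact absurd hx (Finset.notMem_empty x)

lemma dg_leaf {v : V} (hv : v ≠ R.r) (h : R.children v = ∅) : R.dg v = 1 := by
  simp [dg, h, hv]

lemma ach_leaf {v : V} (hv : v ≠ R.r) (h : R.children v = ∅) (τ : ℕ) (hτ : τ ≤ 2) :
    R.Ach v τ τ := by
  refine ⟨fun x => if x = v then τ else 0, ?_, by simp, ?_, ?_, ?_⟩
  · intro u; by_cases hu : u = v <;> simp [hu] <;> omega
  · intro u hu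
    have : u ≠ v := by rintro rfl; exact hu (R.desc_refl u)
    simp [this]
  · intro u hu hne
    exact absurd (R.desc_eq_of_no_children h hu) hne
  · simp [Sw, hv, h]

/-- the "good" invariant: enough achievable values at every pending weight. -/
def IsG (v : V) : Prop :=
  (∃ a₁ a₂, a₁ ≠ a₂ ∧ Even a₁ ∧ R.Ach v 0 a₁ ∧ R.Ach v 0 a₂) ∧
  (∃ b₁ b₂ b₃, b₁ ≠ b₂ ∧ b₁ ≠ b₃ ∧ b₂ ≠ b₃ ∧ R.Ach v 1 b₁ ∧ R.Ach v 1 b₂ ∧ R.Ach v 1 b₃) ∧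
  (∃ c₁ c₂, c₁ ≠ c₂ ∧ Even c₁ ∧ R.Ach v 2 c₁ ∧ R.Ach v 2 c₂)

/-- invariant for every non-root vertex : it is a leaf, a "chain-over-leaf" vertex,
or a good vertex. -/
def Inv (v : V) : Prop :=
  R.children v = ∅ ∨
  (R.dg v = 2 ∧ R.Ach v 0 0 ∧ R.Ach v 1 1 ∧ R.Ach v 1 2 ∧ R.Ach v 1 3 ∧ R.Ach v 2 4) ∨
  R.IsG v

lemma viable0 {u : V} (hu : u ≠ R.r) (hI : R.Inv u) {S dv : ℕ}
    (h1 : 2 * dv ≠ S + 2) (h2 : 2 * dv ≠ S + 4) :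
    ∃ s, R.Ach u 0 s ∧ condE s (R.dg u) 0 S dv := by
  rcases hI with hL | hC | hG
  · exact ⟨0, R.ach_leaf hu hL 0 (by omega), fun h => by omega,
      fun _ => by rw [R.dg_leaf hu hL]; omega⟩
  · exact ⟨0, hC.2.1, fun h => by omega, fun _ => by rw [hC.1]; omega⟩
  · obtain ⟨a₁, a₂, hne, -, ha₁, ha₂⟩ := hG.1
    obtain ⟨s, hs, hcond⟩ := pick_two hne ha₁ ha₂ (2 * dv) (S + 2 * R.dg u)
    exact ⟨s, hs, fun h => by omega, fun _ => hcond⟩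

lemma viable1 {u : V} (hu : u ≠ R.r) (hI : R.Inv u) {S dv : ℕ}
    (h1 : S ≠ 1) (h2 : 2 * dv ≠ S + 1) :
    ∃ s, R.Ach u 1 s ∧ condE s (R.dg u) 1 S dv := by
  rcases hI with hL | hC | hG
  · refine ⟨1, R.ach_leaf hu hL 1 (by omega), fun _ => h1.symm, ?_⟩
    rw [R.dg_leaf hu hL]; omega
  · obtain ⟨s, hs, hc1, hc2⟩ := pick_three (by omega) (by omega) (by omega)
      hC.2.2.1 hC.2.2.2.1 hC.2.2.2.2.1 S (2 * dv) (S + 2 * 2)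
    exact ⟨s, hs, fun _ => hc1, fun _ => by rw [hC.1]; exact hc2⟩
  · obtain ⟨b₁, b₂, b₃, h12, h13, h23, hb₁, hb₂, hb₃⟩ := hG.2.1
    obtain ⟨s, hs, hc1, hc2⟩ := pick_three h12 h13 h23 hb₁ hb₂ hb₃ S (2 * dv) (S + 2 * R.dg u)
    exact ⟨s, hs, fun _ => hc1, fun _ => hc2⟩

lemma viable2 {u : V} (hu : u ≠ R.r) (hI : R.Inv u) {S dv : ℕ}
    (h1 : S ≠ 2) (h2 : S ≠ 4) :
    ∃ s, R.Ach u 2 s ∧ condE s (R.dg u) 2 S dv := by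
  rcases hI with hL | hC | hG
  · exact ⟨2, R.ach_leaf hu hL 2 (by omega), fun _ => h1.symm, fun h => by omega⟩
  · exact ⟨4, hC.2.2.2.2.2, fun _ => h2.symm, fun h => by omega⟩
  · obtain ⟨c₁, c₂, hne, -, hc₁, hc₂⟩ := hG.2.2
    obtain ⟨s, hs, hcond⟩ := pick_two' hne hc₁ hc₂ S
    exact ⟨s, hs, fun _ => hcond, fun h => by omega⟩

/-- realize the sum `τ + c * k` at a non-root vertex by putting weight `k` on every
child edge. -/
lemma realize {v : V} (hv : v ≠ R.r) (τ k : ℕ) (hτ : τ ≤ 2) (hk : k ≤ 2)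
    (hch : ∀ u ∈ R.children v, ∃ s, R.Ach u k s ∧
      condE s (R.dg u) k (τ + (R.children v).card * k) (R.dg v)) :
    R.Ach v τ (τ + (R.children v).card * k) := by
  classical
  have hch' : ∀ u, ∃ s, u ∈ R.children v → R.Ach u k s ∧
      condE s (R.dg u) k (τ + (R.children v).card * k) (R.dg v) := by
    intro u
    by_cases hu : u ∈ R.children v
    · obtain ⟨s, hs⟩ := hch u hu; exact ⟨s, fun _ => hs⟩
    · exact ⟨0, fun h => absurd h hu⟩
  choose s hs using hch'
  have hsum : (if v = R.r then 0 else τ) + ∑ x ∈ R.children v, (fun _ => k) x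
      = τ + (R.children v).card * k := by
    rw [if_neg hv, Finset.sum_const, smul_eq_mul]
  obtain ⟨t, h1, h2, h3, h4, h5, -⟩ := R.combine v τ hτ ∅ (fun _ => k) s
    (fun u _ => hk) (fun u hu => ((hs u) hu).1)
    (fun u hu => Or.inr (by rw [hsum]; exact ((hs u) hu).2))
  refine ⟨t, h1, h2, h3, ?_, by rw [h5, hsum]⟩
  intro u hd hne
  rcases h4 u hd hne with h | h
  · exact h
  · exact absurd h (Finset.notMem_empty u)

/-- Main induction : every non-root vertex satisfies the invariant. -/
theorem inv_all : ∀ (n : ℕ) (v : V), (R.descFinset v).card ≤ n → v ≠ R.r → R.Inv v := by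
  intro n
  induction n with
  | zero =>
    intro v hcard _
    exfalso
    have : v ∈ R.descFinset v := (R.mem_descFinset).2 (R.desc_refl v)
    have := Finset.card_pos.2 ⟨v, this⟩
    omega
  | succ n ih =>
    intro v hcard hv
    have hInv : ∀ u ∈ R.children v, R.Inv u := by
      intro u hu
      have hlt := Finset.card_lt_card (R.descFinset_ssubset hu)
      have hur : u ≠ R.r := ((R.mem_children).1 hu).1
      exact ih u (by omega) hur
    have hchr : ∀ u ∈ R.children v, u ≠ R.r := fun u hu => ((R.mem_children).1 hu).1
    by_cases hc0 : (R.children v).card = 0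
    · exact Or.inl (Finset.card_eq_zero.1 hc0)
    by_cases hc1 : (R.children v).card = 1
    · -- exactly one child
      have hdv : R.dg v = 2 := by simp [dg, hv, hc1]
      obtain ⟨u, hu⟩ := Finset.card_eq_one.1 hc1
      have hmem : u ∈ R.children v := by rw [hu]; exact Finset.mem_singleton_self u
      have hur : u ≠ R.r := hchr u hmem
      have hchone : ∀ x ∈ R.children v, x = u := by
        intro x hx; rwa [hu, Finset.mem_singleton] at hx
      have key : ∀ τ k S : ℕ, τ ≤ 2 → k ≤ 2 → τ + k = S →
          (∃ s, R.Ach u k s ∧ condE s (R.dg u) k (τ + k) 2) → R.Ach v τ S := by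
        intro τ k S hτ hk hS hex
        subst hS
        have := R.realize hv τ k hτ hk (fun x hx => by
          rw [hchone x hx]
          obtain ⟨s, h1, h2⟩ := hex
          refine ⟨s, h1, ?_⟩
          rw [hc1, hdv, one_mul]
          exact h2)
        rwa [hc1, one_mul] at this
      rcases hInv u hmem with hL | hC | hG
      · -- child is a leaf : v is a chain-over-leaf vertex
        have hdu : R.dg u = 1 := R.dg_leaf hur hL
        have key' : ∀ τ k S : ℕ, τ ≤ 2 → k ≤ 2 → τ + k = S →
            condE k 1 k (τ + k) 2 → R.Ach v τ S := by
          intro τ k S hτ hk hS hcond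
          exact key τ k S hτ hk hS ⟨k, R.ach_leaf hur hL k hk, by rw [hdu]; exact hcond⟩
        refine Or.inr (Or.inl ⟨hdv, ?_, ?_, ?_, ?_, ?_⟩)
        · exact key' 0 0 0 (by omega) (by omega) (by omega) ⟨by omega, by omega⟩
        · exact key' 1 0 1 (by omega) (by omega) (by omega) ⟨by omega, by omega⟩
        · exact key' 1 1 2 (by omega) (by omega) (by omega) ⟨by omega, by omega⟩
        · exact key' 1 2 3 (by omega) (by omega) (by omega) ⟨by omega, by omega⟩
        · exact key' 2 2 4 (by omega) (by omega) (by omega) ⟨by omega, by omega⟩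
      · -- child is a chain-over-leaf vertex
        have hdu : R.dg u = 2 := hC.1
        have key' : ∀ τ k s S : ℕ, τ ≤ 2 → k ≤ 2 → τ + k = S → R.Ach u k s →
            condE s 2 k (τ + k) 2 → R.Ach v τ S := by
          intro τ k s S hτ hk hS hach hcond
          exact key τ k S hτ hk hS ⟨s, hach, by rw [hdu]; exact hcond⟩
        refine Or.inr (Or.inr ⟨⟨2, 1, by omega, by decide, ?_, ?_⟩,
          ⟨1, 2, 3, by omega, by omega, by omega, ?_, ?_, ?_⟩,
          ⟨2, 3, by omega, by decide, ?_, ?_⟩⟩)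
        · exact key' 0 2 4 2 (by omega) (by omega) (by omega) hC.2.2.2.2.2 ⟨by omega, by omega⟩
        · exact key' 0 1 2 1 (by omega) (by omega) (by omega) hC.2.2.2.1 ⟨by omega, by omega⟩
        · exact key' 1 0 0 1 (by omega) (by omega) (by omega) hC.2.1 ⟨by omega, by omega⟩
        · exact key' 1 1 1 2 (by omega) (by omega) (by omega) hC.2.2.1 ⟨by omega, by omega⟩
        · exact key' 1 2 4 3 (by omega) (by omega) (by omega) hC.2.2.2.2.2 ⟨by omega, by omega⟩
        · exact key' 2 0 0 2 (by omega) (by omega) (by omega) hC.2.1 ⟨by omega, by omega⟩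
        · exact key' 2 1 1 3 (by omega) (by omega) (by omega) hC.2.2.1 ⟨by omega, by omega⟩
      · -- child is good
        have pick0 : ∀ τ : ℕ, ∃ s, R.Ach u 0 s ∧ condE s (R.dg u) 0 (τ + 0) 2 := by
          intro τ
          obtain ⟨a₁, a₂, hne, -, ha₁, ha₂⟩ := hG.1
          obtain ⟨s, hs, hcond⟩ := pick_two hne ha₁ ha₂ (2 * 2) (τ + 0 + 2 * R.dg u)
          exact ⟨s, hs, fun h => by omega, fun _ => hcond⟩
        have pick1 : ∀ τ : ℕ, ∃ s, R.Ach u 1 s ∧ condE s (R.dg u) 1 (τ + 1) 2 := by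
          intro τ
          obtain ⟨b₁, b₂, b₃, h12, h13, h23, hb₁, hb₂, hb₃⟩ := hG.2.1
          obtain ⟨s, hs, hc1', hc2'⟩ := pick_three h12 h13 h23 hb₁ hb₂ hb₃
            (τ + 1) (2 * 2) (τ + 1 + 2 * R.dg u)
          exact ⟨s, hs, fun _ => hc1', fun _ => hc2'⟩
        have pick2 : ∀ τ : ℕ, ∃ s, R.Ach u 2 s ∧ condE s (R.dg u) 2 (τ + 2) 2 := by
          intro τ
          obtain ⟨c₁, c₂, hne, -, hc₁, hc₂⟩ := hG.2.2
          obtain ⟨s, hs, hcond⟩ := pick_two' hne hc₁ hc₂ (τ + 2)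
          exact ⟨s, hs, fun _ => hcond, fun h => by omega⟩
        refine Or.inr (Or.inr ⟨⟨0, 1, by omega, by decide, ?_, ?_⟩,
          ⟨1, 2, 3, by omega, by omega, by omega, ?_, ?_, ?_⟩,
          ⟨4, 3, by omega, by decide, ?_, ?_⟩⟩)
        · exact key 0 0 0 (by omega) (by omega) (by omega) (pick0 0)
        · exact key 0 1 1 (by omega) (by omega) (by omega) (pick1 0)
        · exact key 1 0 1 (by omega) (by omega) (by omega) (pick0 1)
        · exact key 1 1 2 (by omega) (by omega) (by omega) (pick1 1)
        · exact key 1 2 3 (by omega) (by omega) (by omega) (pick2 1)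
        · exact key 2 2 4 (by omega) (by omega) (by omega) (pick2 2)
        · exact key 2 1 3 (by omega) (by omega) (by omega) (pick1 2)
    · -- at least two children : v is good
      have hc2 : 2 ≤ (R.children v).card := by omega
      have hdv : R.dg v = (R.children v).card + 1 := by simp [dg, hv]
      have via0 : ∀ τ : ℕ, τ ≤ 2 → 2 * ((R.children v).card + 1) ≠ τ + 2 →
          2 * ((R.children v).card + 1) ≠ τ + 4 → R.Ach v τ τ := by
        intro τ hτ h1 h2
        have := R.realize hv τ 0 hτ (by omega) (fun u hu =>
          R.viable0 (hchr u hu) (hInv u hu) (by rw [hdv]; omega) (by rw [hdv]; omega))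
        simpa using this
      have via1 : ∀ τ S : ℕ, τ ≤ 2 → τ + (R.children v).card = S → R.Ach v τ S := by
        intro τ S hτ hS
        subst hS
        have := R.realize hv τ 1 hτ (by omega) (fun u hu =>
          R.viable1 (hchr u hu) (hInv u hu) (by omega) (by rw [hdv]; omega))
        simpa using this
      have via2 : ∀ τ S : ℕ, τ ≤ 2 → τ + 2 * (R.children v).card ≠ 2 →
          τ + 2 * (R.children v).card ≠ 4 → τ + (R.children v).card * 2 = S →
          R.Ach v τ S := by
        intro τ S hτ h1 h2 hS
        subst hS
        exact R.realize hv τ 2 hτ (by omega) (fun u hu =>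
          R.viable2 (hchr u hu) (hInv u hu) (by omega) (by omega))
      refine Or.inr (Or.inr ⟨⟨0, (R.children v).card, by omega, by decide, ?_, ?_⟩,
        ⟨1, 1 + (R.children v).card, 1 + (R.children v).card * 2,
          by omega, by omega, by omega, ?_, ?_, ?_⟩,
        ⟨2 + (R.children v).card * 2, 2 + (R.children v).card, by omega, ⟨1 + (R.children v).card, by omega⟩, ?_, ?_⟩⟩)
      · exact via0 0 (by omega) (by omega) (by omega)
      · exact via1 0 _ (by omega) (by omega)
      · exact via0 1 (by omega) (by omega) (by omega)
      · exact via1 1 _ (by omega) rfl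
      · exact via2 1 _ (by omega) (by omega) (by omega) rfl
      · exact via2 2 _ (by omega) (by omega) (by omega) rfl
      · exact via1 2 _ (by omega) rfl

end RTree

end Part3
section Part4

variable {V : Type*} [Fintype V] [DecidableEq V]

namespace RTree

variable (R : RTree V)

/-- The root assembly : a globally almost-valid weighting with at most one conflict,
which occurs at an edge incident to the root, and even class-degrees at the root
and its neighbours. -/
theorem root_coloring (hx : ∃ v : V, v ≠ R.r) :
    ∃ (t : V → ℕ) (N : Finset V), (∀ u, t u ≤ 2) ∧ N ⊆ R.children R.r ∧ N.card ≤ 1 ∧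
      (∀ u, u ≠ R.r → (R.cond t u ∨ u ∈ N)) ∧
      Even (R.Sw t R.r) ∧ (∀ u ∈ R.children R.r, Even (R.Sw t u)) := by
  classical
  have hCne : (R.children R.r).Nonempty := by
    obtain ⟨v, hv⟩ := hx
    obtain ⟨u, hu, -⟩ := R.exists_child_desc (R.desc_root v) hv
    exact ⟨u, hu⟩
  set C := R.children R.r with hC
  set c := C.card with hc
  have hc1 : 1 ≤ c := Finset.card_pos.2 hCne
  have hInv : ∀ u ∈ C, R.Inv u := fun u hu =>
    R.inv_all (R.descFinset u).card u le_rfl (((R.mem_children).1 hu).1)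
  -- even achievable interface values for pending weights 0 and 2
  have hopt : ∀ u, ∃ ag : ℕ × ℕ, u ∈ C →
      (Even ag.1 ∧ R.Ach u 0 ag.1 ∧ Even ag.2 ∧ R.Ach u 2 ag.2) := by
    intro u
    by_cases hu : u ∈ C
    · have hur : u ≠ R.r := ((R.mem_children).1 hu).1
      rcases hInv u hu with hL | hCc | hG
      · exact ⟨(0, 2), fun _ => ⟨by decide, R.ach_leaf hur hL 0 (by omega), by decide,
          R.ach_leaf hur hL 2 (by omega)⟩⟩
      · exact ⟨(0, 4), fun _ => ⟨by decide, hCc.2.1, by decide, hCc.2.2.2.2.2⟩⟩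
      · obtain ⟨a₁, a₂, -, hae, ha₁, -⟩ := hG.1
        obtain ⟨c₁, c₂, -, hce, hc₁, -⟩ := hG.2.2
        exact ⟨(a₁, c₁), fun _ => ⟨hae, ha₁, hce, hc₁⟩⟩
    · exact ⟨(0, 0), fun h => absurd h hu⟩
  choose ag hag using hopt
  set α : V → ℕ := fun u => (ag u).1 with hα
  set γ : V → ℕ := fun u => (ag u).2 with hγ
  have hdgr : R.dg R.r = c := by simp [dg, hc, hC, children]
  -- pigeonhole : some k ∈ [0, c] is bad for at most one child
  set m : ℕ → ℕ := fun k => (C.filter (fun u => α u + 2 * c = 2 * k + 2 * R.dg u)).card with hm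
  set nn : ℕ → ℕ := fun k => (C.filter (fun u => γ u = 2 * k)).card with hnn
  have hsum : ∀ (f : V → ℕ),
      ∑ k ∈ Finset.range (c + 1), (C.filter (fun u => f u = 2 * k)).card ≤ c := by
    intro f
    have : ∀ k, (C.filter (fun u => f u = 2 * k)).card
        = ∑ u ∈ C, if f u = 2 * k then 1 else 0 := by
      intro k; rw [Finset.card_filter]
    calc ∑ k ∈ Finset.range (c + 1), (C.filter (fun u => f u = 2 * k)).card
        = ∑ k ∈ Finset.range (c + 1), ∑ u ∈ C, if f u = 2 * k then 1 else 0 := by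
          exact Finset.sum_congr rfl fun k _ => this k
      _ = ∑ u ∈ C, ∑ k ∈ Finset.range (c + 1), if f u = 2 * k then 1 else 0 :=
          Finset.sum_comm
      _ ≤ ∑ u ∈ C, 1 := by
          refine Finset.sum_le_sum fun u _ => ?_
          rw [← Finset.card_filter]
          refine Finset.card_le_one.2 fun k₁ h₁ k₂ h₂ => ?_
          rw [Finset.mem_filter] at h₁ h₂
          omega
      _ = c := by rw [Finset.sum_const, smul_eq_mul, mul_one]
  have hmsum : ∑ k ∈ Finset.range (c + 1), m k ≤ c := by
    have := hsum (fun u => α u + 2 * c - 2 * R.dg u)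
    calc ∑ k ∈ Finset.range (c + 1), m k
        ≤ ∑ k ∈ Finset.range (c + 1),
            (C.filter (fun u => α u + 2 * c - 2 * R.dg u = 2 * k)).card := by
          refine Finset.sum_le_sum fun k _ => Finset.card_le_card ?_
          intro u hu
          rw [Finset.mem_filter] at hu ⊢
          exact ⟨hu.1, by omega⟩
      _ ≤ c := this
  have hnsum : ∑ k ∈ Finset.range (c + 1), nn k ≤ c := hsum γ
  have hkex : ∃ k, k ≤ c ∧ m k + nn k ≤ 1 := by
    by_contra h
    push_neg at h
    have h2 : ∀ k ∈ Finset.range (c + 1), 2 ≤ m k + nn k := by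
      intro k hk
      rw [Finset.mem_range] at hk
      exact h k (by omega)
    have := Finset.card_nsmul_le_sum (Finset.range (c + 1)) (fun k => m k + nn k) 2 h2
    rw [Finset.card_range, Finset.sum_add_distrib, smul_eq_mul] at this
    omega
  obtain ⟨k, hkc, hk1⟩ := hkex
  obtain ⟨F, hFsub, hFcard⟩ := Finset.exists_subset_card_eq (show k ≤ C.card by omega)
  set w : V → ℕ := fun u => if u ∈ F then 2 else 0 with hw
  set sfun : V → ℕ := fun u => if u ∈ F then γ u else α u with hsfun
  have hSsum : ∑ x ∈ C, w x = 2 * k := by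
    rw [hw]
    rw [Finset.sum_ite_mem, Finset.inter_eq_right.2 hFsub, Finset.sum_const, smul_eq_mul,
      hFcard]
    ring
  set N := C.filter (fun u => if u ∈ F then γ u = 2 * k else α u + 2 * c = 2 * k + 2 * R.dg u)
    with hN
  have hNsub : N ⊆ C := Finset.filter_subset _ _
  have hNcard : N.card ≤ 1 := by
    have hsub : N ⊆ (C.filter (fun u => α u + 2 * c = 2 * k + 2 * R.dg u)) ∪
        (C.filter (fun u => γ u = 2 * k)) := by
      intro u hu
      rw [hN, Finset.mem_filter] at hu
      rw [Finset.mem_union, Finset.mem_filter, Finset.mem_filter]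
      by_cases huF : u ∈ F
      · right; rw [if_pos huF] at hu; exact ⟨hu.1, hu.2⟩
      · left; rw [if_neg huF] at hu; exact ⟨hu.1, hu.2⟩
    calc N.card ≤ _ := Finset.card_le_card hsub
      _ ≤ m k + nn k := Finset.card_union_le _ _
      _ ≤ 1 := hk1
  have hcombine := R.combine R.r 0 (by omega) N w sfun
    (fun u _ => by rw [hw]; by_cases h : u ∈ F <;> simp [h])
    (fun u hu => by
      rw [hw, hsfun]
      by_cases h : u ∈ F
      · simp only [hw, hsfun, if_pos h]; exact ((hag u) hu).2.2.2
      · simp only [hw, hsfun, if_neg h]; exact ((hag u) hu).2.1)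
    (fun u hu => by
      by_cases hNm : u ∈ N
      · exact Or.inl hNm
      · right
        rw [if_pos rfl, zero_add, hSsum]
        rw [hN, Finset.mem_filter] at hNm
        by_cases huF : u ∈ F
        · simp only [hw, hsfun, if_pos huF]
          refine ⟨fun _ => ?_, fun h2 => by omega⟩
          intro heq
          exact hNm ⟨hu, by rw [if_pos huF]; exact heq⟩
        · simp only [hw, hsfun, if_neg huF]
          refine ⟨fun h1 => by omega, fun _ => ?_⟩
          rw [hdgr]
          intro heq
          exact hNm ⟨hu, by rw [if_neg huF]; omega⟩)
  obtain ⟨t, ht2, -, -, hcond, hSwr, hSwu⟩ := hcombine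
  refine ⟨t, N, ht2, hNsub, hNcard, ?_, ?_, ?_⟩
  · intro u hu
    exact hcond u (R.desc_root u) hu
  · rw [hSwr, if_pos rfl, zero_add, hSsum]
    exact ⟨k, by ring⟩
  · intro u hu
    rw [hSwu u hu]
    by_cases h : u ∈ F
    · simp only [hsfun, if_pos h]; exact ((hag u) hu).2.2.1
    · simp only [hsfun, if_neg h]; exact ((hag u) hu).1

end RTree

end Part4
section Part5

open SimpleGraph Walk

variable {V : Type*} [Fintype V] [DecidableEq V]

theorem exists_rtree (T : SimpleGraph V) (hT : T.IsTree) (r : V) :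
    ∃ R : RTree V, R.r = r ∧
      (∀ v w, T.Adj v w ↔ (v ≠ r ∧ R.par v = w) ∨ (w ≠ r ∧ R.par w = v)) := by
  classical
  have hEU := hT.existsUnique_path
  set pth : ∀ v : V, T.Walk v r := fun v => (hEU v r).exists.choose with hpth
  have hpath : ∀ v, (pth v).IsPath := fun v => (hEU v r).exists.choose_spec
  have huniq : ∀ (v : V) (q : T.Walk v r), q.IsPath → pth v = q := fun v q hq =>
    ((hEU v r).unique (hpath v) hq)
  set par : V → V := fun v => (pth v).getVert 1 with hpar
  set dep : V → ℕ := fun v => (pth v).length with hdep'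
  have hr : pth r = Walk.nil := huniq r Walk.nil Walk.IsPath.nil
  have hnotnil : ∀ v, v ≠ r → ¬ (pth v).Nil := fun v hv => Walk.not_nil_of_ne hv
  have hadj_par : ∀ v, v ≠ r → T.Adj v (par v) := fun v hv =>
    (pth v).adj_snd (hnotnil v hv)
  have htail : ∀ v, v ≠ r → pth (par v) = (pth v).tail := by
    intro v hv
    exact huniq (par v) ((pth v).tail) ((hpath v).tail)
  have hdepth : ∀ v, v ≠ r → dep v = dep (par v) + 1 := by
    intro v hv
    have := (pth v).length_tail_add_one (hnotnil v hv)
    rw [hdep']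
    simp only
    rw [htail v hv]
    omega
  refine ⟨⟨r, par, dep, ?_, ?_, hdepth⟩, rfl, ?_⟩
  · -- par r = r
    rw [hpar]; simp only
    rw [hr]
    exact Walk.getVert_of_length_le _ (by simp)
  · -- dep r = 0
    rw [hdep']; simp only [hr]
    simp
  · -- adjacency characterization
    intro v w
    constructor
    · intro h
      by_cases hvQ : v ∈ (pth w).support
      · -- then w ≠ r and par w = v
        right
        have hwr : w ≠ r := by
          rintro rfl
          rw [hr] at hvQ
          simp at hvQ
          subst hvQ
          exact T.irrefl h
        refine ⟨hwr, ?_⟩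
        have hQ1 : (pth w).takeUntil v hvQ = Walk.cons h.symm Walk.nil :=
          (hEU w v).unique ((hpath w).takeUntil hvQ)
            ((Walk.cons_isPath_iff h.symm Walk.nil).2 ⟨Walk.IsPath.nil, by simp [h.ne']⟩)
        have hsp := (pth w).take_spec hvQ
        have hgv : (pth w).getVert 1 = v := by
          conv_lhs => rw [← hsp]
          rw [Walk.getVert_append, hQ1]
          simp
        exact hgv
      · -- then v ≠ r and par v = w
        left
        have hvr : v ≠ r := by
          rintro rfl
          exact hvQ ((pth w).end_mem_support)
        refine ⟨hvr, ?_⟩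
        have heq : pth v = Walk.cons h (pth w) := huniq v _ ((hpath w).cons hvQ)
        show (pth v).getVert 1 = w
        rw [heq, Walk.getVert_cons_succ, Walk.getVert_zero]
    · rintro (⟨hv, hp⟩ | ⟨hw, hp⟩)
      · rw [← hp]; exact hadj_par v hv
      · rw [← hp]; exact (hadj_par w hw).symm

end Part5
section Part6

variable {V : Type*} [Fintype V] [DecidableEq V]

/-- encoding of an edge weight (number of copies of color `0`) as a pair of colors. -/
def enc (n : ℕ) : Fin 2 × Fin 2 :=
  if n = 0 then (1, 1) else if n = 1 then (0, 1) else (0, 0)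

lemma enc_cnt0 (n : ℕ) (hn : n ≤ 2) :
    ((if (enc n).1 = 0 then 1 else 0) + (if (enc n).2 = 0 then 1 else 0)) = n := by
  interval_cases n <;> decide

lemma enc_cnt1 (n : ℕ) (hn : n ≤ 2) :
    ((if (enc n).1 = 1 then 1 else 0) + (if (enc n).2 = 1 then 1 else 0)) = 2 - n := by
  interval_cases n <;> decide

lemma enc_mem0 (n : ℕ) (hn : n ≤ 2) :
    ((enc n).1 = 0 ∨ (enc n).2 = 0) ↔ 1 ≤ n := by
  interval_cases n <;> decide

lemma enc_mem1 (n : ℕ) (hn : n ≤ 2) :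
    ((enc n).1 = 1 ∨ (enc n).2 = 1) ↔ n ≤ 1 := by
  interval_cases n <;> decide

theorem main_result (T : SimpleGraph V) [DecidableRel T.Adj] (hT : T.IsTree)
    (h3 : 3 ≤ Fintype.card V) (r : V) :
    ∃ c : Sym2 V → Fin 2 × Fin 2, ∃ N : Finset V,
      N.card ≤ 2 ∧ (∀ w ∈ N, T.Adj r w) ∧
      (∀ v w, T.Adj v w → ∀ k : Fin 2, ((c s(v, w)).1 = k ∨ (c s(v, w)).2 = k) →
        degIn2 T c k v = degIn2 T c k w → (v = r ∧ w ∈ N) ∨ (w = r ∧ v ∈ N)) ∧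
      (∀ k : Fin 2, Even (degIn2 T c k r) ∧ ∀ w, T.Adj r w → Even (degIn2 T c k w)) := by
  classical
  obtain ⟨R, hRr, hadj⟩ := exists_rtree T hT r
  subst hRr
  obtain ⟨t, N, ht2, hNsub, hNcard, hcond, hevr, hevu⟩ :=
    R.root_coloring (Fintype.exists_ne_of_one_lt_card (by omega) R.r)
  -- both parent relations cannot hold simultaneously
  have hnotboth : ∀ v w : V, v ≠ R.r → R.par v = w → w ≠ R.r → R.par w = v → False := by
    intro v w hv hpv hw hpw
    have h1 := R.hdep v hv
    have h2 := R.hdep w hw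
    rw [hpv] at h1; rw [hpw] at h2
    omega
  -- the edge weight function, symmetrized
  set ew : V → V → ℕ := fun a b =>
    if a ≠ R.r ∧ R.par a = b then t a else if b ≠ R.r ∧ R.par b = a then t b else 0 with hew
  have hew_symm : ∀ a b, ew a b = ew b a := by
    intro a b
    rw [hew]
    simp only
    by_cases h1 : a ≠ R.r ∧ R.par a = b
    · by_cases h2 : b ≠ R.r ∧ R.par b = a
      · exact absurd (hnotboth a b h1.1 h1.2 h2.1 h2.2) not_false
      · simp [h1, h2]
    · by_cases h2 : b ≠ R.r ∧ R.par b = a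
      · simp [h1, h2]
      · simp [h1, h2]
  set col : Sym2 V → Fin 2 × Fin 2 :=
    Sym2.lift ⟨fun a b => enc (ew a b), fun a b => congrArg enc (hew_symm a b)⟩ with hcol
  have hcol_mk : ∀ a b, col s(a, b) = enc (ew a b) := fun a b => rfl
  have hew_le : ∀ a b, ew a b ≤ 2 := by
    intro a b
    rw [hew]
    simp only
    by_cases h1 : a ≠ R.r ∧ R.par a = b
    · rw [if_pos h1]; exact ht2 a
    · rw [if_neg h1]
      by_cases h2 : b ≠ R.r ∧ R.par b = a
      · rw [if_pos h2]; exact ht2 b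
      · rw [if_neg h2]; omega
  -- description of the neighborhood
  have hnbr : ∀ v : V, Finset.univ.filter (T.Adj v ·) =
      (R.children v) ∪ (if v = R.r then ∅ else {R.par v}) := by
    intro v
    ext x
    rw [Finset.mem_filter, Finset.mem_union, R.mem_children]
    constructor
    · rintro ⟨-, hx⟩
      rcases (hadj v x).1 hx with ⟨hv, hp⟩ | ⟨hx', hp⟩
      · right; rw [if_neg hv, Finset.mem_singleton, ← hp]
      · left; exact ⟨hx', hp⟩
    · intro h
      refine ⟨Finset.mem_univ x, ?_⟩
      rcases h with ⟨hx', hp⟩ | hx'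
      · exact (hadj v x).2 (Or.inr ⟨hx', hp⟩)
      · by_cases hv : v = R.r
        · rw [if_pos hv] at hx'; exact absurd hx' (Finset.notMem_empty x)
        · rw [if_neg hv, Finset.mem_singleton] at hx'
          exact (hadj v x).2 (Or.inl ⟨hv, hx'.symm⟩)
  have hpar_not_child : ∀ v : V, v ≠ R.r → R.par v ∉ R.children v := by
    intro v hv hmem
    rw [R.mem_children] at hmem
    exact hnotboth v (R.par v) hv rfl hmem.1 hmem.2
  have hdisj : ∀ v : V, Disjoint (R.children v) (if v = R.r then ∅ else {R.par v}) := by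
    intro v
    by_cases hv : v = R.r
    · rw [if_pos hv]; exact Finset.disjoint_empty_right _
    · rw [if_neg hv, Finset.disjoint_singleton_right]
      exact hpar_not_child v hv
  have hew_child : ∀ v x : V, x ∈ R.children v → ew v x = t x := by
    intro v x hx
    rw [R.mem_children] at hx
    rw [hew]
    simp only
    rw [if_neg, if_pos hx]
    intro ⟨hv, hp⟩
    exact hnotboth v x hv hp hx.1 hx.2
  have hew_par : ∀ v : V, v ≠ R.r → ew v (R.par v) = t v := by
    intro v hv
    rw [hew]
    simp [hv]
  -- degree computations
  have hdeg0 : ∀ v : V, degIn2 T col 0 v = R.Sw t v := by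
    intro v
    unfold degIn2
    rw [hnbr v, Finset.sum_union (hdisj v)]
    have h1 : ∑ w ∈ R.children v,
        ((if (col s(v, w)).1 = 0 then 1 else 0) + (if (col s(v, w)).2 = 0 then 1 else 0))
        = ∑ w ∈ R.children v, t w := by
      refine Finset.sum_congr rfl fun x hx => ?_
      rw [hcol_mk, enc_cnt0 _ (hew_le v x), hew_child v x hx]
    have h2 : ∑ w ∈ (if v = R.r then (∅ : Finset V) else {R.par v}),
        ((if (col s(v, w)).1 = 0 then 1 else 0) + (if (col s(v, w)).2 = 0 then 1 else 0))
        = (if v = R.r then 0 else t v) := by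
      by_cases hv : v = R.r
      · rw [if_pos hv, if_pos hv, Finset.sum_empty]
      · rw [if_neg hv, if_neg hv, Finset.sum_singleton, hcol_mk,
          enc_cnt0 _ (hew_le v (R.par v)), hew_par v hv]
    rw [h1, h2]
    unfold RTree.Sw
    omega
  have hcardnbr : ∀ v : V, (Finset.univ.filter (T.Adj v ·)).card = R.dg v := by
    intro v
    rw [hnbr v, Finset.card_union_of_disjoint (hdisj v)]
    unfold RTree.dg
    by_cases hv : v = R.r
    · rw [if_pos hv, if_pos hv, Finset.card_empty]
    · rw [if_neg hv, if_neg hv, Finset.card_singleton]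
  have hdeg1 : ∀ v : V, degIn2 T col 1 v + R.Sw t v = 2 * R.dg v := by
    intro v
    have : degIn2 T col 1 v + degIn2 T col 0 v = 2 * R.dg v := by
      unfold degIn2
      rw [← Finset.sum_add_distrib]
      have : ∀ x ∈ Finset.univ.filter (T.Adj v ·),
          ((if (col s(v, x)).1 = 1 then 1 else 0) + (if (col s(v, x)).2 = 1 then 1 else 0)) +
          ((if (col s(v, x)).1 = 0 then 1 else 0) + (if (col s(v, x)).2 = 0 then 1 else 0))
          = 2 := by
        intro x _
        rw [hcol_mk, enc_cnt0 _ (hew_le v x), enc_cnt1 _ (hew_le v x)]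
        have := hew_le v x
        omega
      rw [Finset.sum_congr rfl this, Finset.sum_const, smul_eq_mul, mul_comm, hcardnbr v]
    rw [hdeg0] at this
    omega
  -- the conflict analysis for one orientation of an edge
  have main : ∀ v w : V, v ≠ R.r → R.par v = w → ∀ k : Fin 2,
      ((col s(v, w)).1 = k ∨ (col s(v, w)).2 = k) →
      degIn2 T col k v = degIn2 T col k w → v ∈ N := by
    intro v w hv hp k hk hdeq
    rcases hcond v hv with hcnd | hmem
    · exfalso
      have hcolv : col s(v, w) = enc (t v) := by rw [hcol_mk, ← hp, hew_par v hv]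
      rw [hcolv] at hk
      unfold RTree.cond RTree.condE at hcnd
      have hfin : k = 0 ∨ k = 1 := by fin_cases k <;> simp
      rcases hfin with rfl | rfl
      · have h1 : 1 ≤ t v := (enc_mem0 _ (ht2 v)).1 hk
        rw [hdeg0, hdeg0] at hdeq
        rw [← hp] at hdeq
        exact hcnd.1 h1 hdeq
      · have h1 : t v ≤ 1 := (enc_mem1 _ (ht2 v)).1 hk
        have e1 := hdeg1 v
        have e2 := hdeg1 w
        rw [hdeq, ← hp] at e1
        rw [← hp] at e2
        exact hcnd.2 h1 (by omega)
    · exact hmem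
  have hNchild : ∀ u ∈ N, u ≠ R.r ∧ R.par u = R.r := fun u hu =>
    (R.mem_children).1 (hNsub hu)
  refine ⟨col, N, by omega, ?_, ?_, ?_⟩
  · intro w hw
    exact (hadj R.r w).2 (Or.inr (hNchild w hw))
  · intro v w hvw k hk hdeq
    rcases (hadj v w).1 hvw with ⟨hv, hp⟩ | ⟨hw, hp⟩
    · right
      have := main v w hv hp k hk hdeq
      exact ⟨by rw [← hp, ((R.mem_children).1 (hNsub this)).2], this⟩
    · left
      have hk' : ((col s(w, v)).1 = k ∨ (col s(w, v)).2 = k) := by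
        rwa [Sym2.eq_swap] at hk
      have hmem := main w v hw hp k hk' hdeq.symm
      exact ⟨by rw [← hp, ((R.mem_children).1 (hNsub hmem)).2], hmem⟩
  · intro k
    have hparity : ∀ v : V, Even (R.Sw t v) → Even (degIn2 T col 1 v) := by
      intro v hv
      obtain ⟨a, ha⟩ := hv
      have := hdeg1 v
      exact ⟨R.dg v - a, by omega⟩
    have hchild_of_adj : ∀ w, T.Adj R.r w → w ∈ R.children R.r := by
      intro w hw
      rcases (hadj R.r w).1 hw with ⟨hv, -⟩ | ⟨hw', hp⟩
      · exact absurd rfl hv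
      · exact (R.mem_children).2 ⟨hw', hp⟩
    have hk01 : k = 0 ∨ k = 1 := by fin_cases k <;> simp
    rcases hk01 with rfl | rfl
    · exact ⟨by rw [hdeg0]; exact hevr,
        fun w hw => by rw [hdeg0]; exact hevu w (hchild_of_adj w hw)⟩
    · exact ⟨hparity R.r hevr, fun w hw => hparity w (hevu w (hchild_of_adj w hw))⟩

end Part6

/-- For every tree `T` on at least 3 vertices (so `T` has an edge and is not `K₂`) rooted at
`r`, the doubled multigraph `²T` admits a red-blue edge coloring which is locally irregular
except possibly for conflicts between `r` and at most two of its neighbours; moreover in this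
coloring `r` and all its neighbours have even degree in each color class. -/
theorem stmt_15 {V : Type*} [Fintype V] [DecidableEq V] (T : SimpleGraph V)
    [DecidableRel T.Adj] (hT : T.IsTree) (h3 : 3 ≤ Fintype.card V) (r : V) :
    ∃ c : Sym2 V → Fin 2 × Fin 2, ∃ N : Finset V,
      N.card ≤ 2 ∧ (∀ w ∈ N, T.Adj r w) ∧
      (∀ v w, T.Adj v w → ∀ k : Fin 2, ((c s(v, w)).1 = k ∨ (c s(v, w)).2 = k) →
        degIn2 T c k v = degIn2 T c k w → (v = r ∧ w ∈ N) ∨ (w = r ∧ v ∈ N)) ∧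
      (∀ k : Fin 2, Even (degIn2 T c k r) ∧ ∀ w, T.Adj r w → Even (degIn2 T c k w)) := by
  exact main_result T hT h3 r
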